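/- Let I be a proper ideal of R = C^∞(M,ℝ) of finite codimension, and suppose I = I₁ ∩ ⋯ ∩ I_n where each I_i is an ideal of R whose spectrum is a singleton {y_i} and the points y₁, …, y_n are pairwise distinct. Then {y₁, …, y_n} = spec(I) and I_i = I + 𝔫_{y_i} for every i; in particular such a decomposition is unique up to permutation of the factors. -/

import Mathlib

set_option linter.unusedSectionVars false
set_option maxHeartbeats 1000000


open scoped Manifold
open Module Filter Topology

noncomputable section

/-- The ℝ-algebra of smooth real-valued functions on a manifold `M` modelled on `ℝ^m`. -/
abbrev SmoothFns (m : ℕ) (M : Type*) [TopologicalSpace M]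
    [ChartedSpace (EuclideanSpace ℝ (Fin m)) M] : Type _ :=
  C^(⊤ : ℕ∞)⟮𝓡 m, M; 𝓘(ℝ, ℝ), ℝ⟯

variable {m : ℕ} {M : Type*} [TopologicalSpace M] [T2Space M] [SecondCountableTopology M]
  [ChartedSpace (EuclideanSpace ℝ (Fin m)) M] [IsManifold (𝓡 m) (⊤ : ℕ∞) M]

/-- The ideal `𝔪ₓ` of smooth functions vanishing at the point `x`. -/
def mIdeal (x : M) : Ideal (SmoothFns m M) where
  carrier := {f | f x = 0}
  add_mem' := by intro f g hf hg; simp_all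
  zero_mem' := by simp
  smul_mem' := by intro c f hf; simp_all

/-- The ideal `𝔫ₓ` of smooth functions vanishing on some neighbourhood of the point `x`. -/
def nIdeal (x : M) : Ideal (SmoothFns m M) where
  carrier := {f | ∀ᶠ y in 𝓝 x, f y = 0}
  add_mem' := by
    intro f g hf hg
    filter_upwards [hf, hg] with y h1 h2
    simp [h1, h2]
  zero_mem' := by filter_upwards with y; simp
  smul_mem' := by
    intro c f hf
    filter_upwards [hf] with y h
    simp [h]

/-- The spectrum of an ideal: the set of common zeros of its elements. -/
def idealSpec (I : Ideal (SmoothFns m M)) : Set M :=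
  {x : M | ∀ f ∈ I, f x = 0}


theorem aux_div (f H : SmoothFns m M) {U : Set M} (hU : IsOpen U)
    (hf : ∀ x ∈ U, f x = 0) (hH : ∀ x, H x = 0 → x ∈ U) :
    ∃ q : SmoothFns m M, f = q * H := by
  set q0 : M → ℝ := fun x => f x * (H x)⁻¹ with hq0
  have hq : ContMDiff (𝓡 m) 𝓘(ℝ, ℝ) (⊤ : ℕ∞) q0 := by
    intro x
    by_cases hx : H x = 0
    · have hxU : x ∈ U := hH x hx
      have hev : q0 =ᶠ[𝓝 x] fun _ => (0 : ℝ) := by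
        filter_upwards [hU.mem_nhds hxU] with z hz
        simp [hq0, hf z hz]
      exact (contMDiffAt_const (c := (0:ℝ))).congr_of_eventuallyEq hev
    · exact (f.contMDiff.contMDiffAt).mul ((H.contMDiff.contMDiffAt).inv₀ hx)
  refine ⟨⟨q0, hq⟩, ContMDiffMap.ext fun z => ?_⟩
  change f z = q0 z * H z
  by_cases hz : H z = 0
  · simp [hf z (hH z hz), hq0, hz]
  · simp only [ContMDiffMap.coe_mul, Pi.mul_apply, ContMDiffMap.coeFn_mk, hq0]
    field_simp

theorem aux_exhaustion :
    ∃ ρ : SmoothFns m M, ∀ N : ℝ, IsCompact {x | ρ x ≤ N} := by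
  haveI : LocallyCompactSpace M := ChartedSpace.locallyCompactSpace (EuclideanSpace ℝ (Fin m)) M
  haveI : SigmaCompactSpace M := inferInstance
  set K := CompactExhaustion.choice M with hK
  have hdisj : ∀ n : ℕ, Disjoint ((interior (K (n+1)))ᶜ) (K n) := fun n =>
    Set.disjoint_left.mpr fun x hx hx' => hx (K.subset_interior_succ n hx')
  have hex : ∀ n : ℕ, ∃ φ : SmoothFns m M,
      (Set.EqOn φ 0 ((interior (K (n+1)))ᶜ)) ∧ Set.EqOn φ 1 (K n) ∧ ∀ x, φ x ∈ Set.Icc (0:ℝ) 1 :=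
    fun n => exists_contMDiffMap_zero_one_of_isClosed (𝓡 m) isOpen_interior.isClosed_compl
      (K.isCompact n).isClosed (hdisj n)
  choose φ hφ0 hφ1 hφm using hex
  set g : ℕ → M → ℝ := fun n x => 1 - φ n x with hg
  have hgnonneg : ∀ n x, 0 ≤ g n x := fun n x => by
    have := (hφm n x).2; simp [hg]; linarith
  have hsupp : ∀ n, Function.support (g n) ⊆ (K n)ᶜ := by
    intro n x hx
    simp only [Function.mem_support, hg] at hx
    intro hxK
    exact hx (by rw [hφ1 n hxK]; simp)
  have hlf : LocallyFinite fun n => Function.support (g n) := by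
    intro x
    obtain ⟨N, hN⟩ := K.exists_mem x
    refine ⟨interior (K (N+1)), isOpen_interior.mem_nhds (K.subset_interior_succ N hN), ?_⟩
    apply Set.Finite.subset (Set.finite_Iio (N+1))
    intro n hn
    rcases hn with ⟨z, hz1, hz2⟩
    by_contra hlt
    simp only [Set.mem_Iio, not_lt] at hlt
    exact hsupp n hz1 (K.subset hlt (interior_subset hz2))
  have hsm : ContMDiff (𝓡 m) 𝓘(ℝ, ℝ) (⊤ : ℕ∞) (fun x => ∑ᶠ n, g n x) := by
    apply contMDiff_finsum (fun n => ?_) hlf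
    exact contMDiff_const.sub (φ n).contMDiff
  refine ⟨⟨fun x => ∑ᶠ n, g n x, hsm⟩, fun N => ?_⟩
  set n := ⌈N⌉₊ with hn
  have hsub : {x : M | (∑ᶠ k, g k x) ≤ N} ⊆ K (n+1) := by
    intro x hx
    by_contra hxK
    have hone : ∀ k ∈ Finset.range (n+1), g k x = 1 := by
      intro k hk
      simp only [Finset.mem_range] at hk
      have hxk : x ∈ (interior (K (k+1)))ᶜ := by
        intro hmem
        exact hxK (K.subset (by omega) (interior_subset hmem))
      simp [hg, hφ0 k hxk]
    have hfin : (Function.support fun k => g k x).Finite := hlf.point_finite x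
    have hfs : (∑ᶠ k, g k x) = ∑ k ∈ (Finset.range (n+1)) ∪ hfin.toFinset, g k x := by
      apply finsum_eq_sum_of_support_subset
      intro k hk
      simp only [Finset.coe_union, Set.mem_union]
      right
      simpa using hk
    have hge : (n+1 : ℝ) ≤ ∑ᶠ k, g k x := by
      rw [hfs]
      calc (n+1 : ℝ) = ∑ k ∈ Finset.range (n+1), g k x := by
            rw [Finset.sum_congr rfl hone]; simp
        _ ≤ ∑ k ∈ (Finset.range (n+1)) ∪ hfin.toFinset, g k x :=
            Finset.sum_le_sum_of_subset_of_nonneg Finset.subset_union_left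
              (fun k _ _ => hgnonneg k x)
    have : (n+1 : ℝ) ≤ N := le_trans hge hx
    have hNn : N ≤ (n : ℝ) := Nat.le_ceil N
    linarith
  refine (K.isCompact (n+1)).of_isClosed_subset ?_ hsub
  exact isClosed_le (hsm.continuous) continuous_const

theorem aux_key (J : Ideal (SmoothFns m M)) (hfd : FiniteDimensional ℝ (SmoothFns m M ⧸ J))
    {U : Set M} (hU : IsOpen U) (hspec : ∀ x, x ∉ U → ∃ g ∈ J, g x ≠ 0)
    (f : SmoothFns m M) (hf : ∀ x ∈ U, f x = 0) : f ∈ J := by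
  classical
  obtain ⟨ρ, hρ⟩ := aux_exhaustion (m := m) (M := M)
  set d := finrank ℝ (SmoothFns m M ⧸ J) with hd
  -- linear dependence of powers of ρ in the quotient
  have hni : ¬ LinearIndependent ℝ
      (fun k : Fin (d+1) => Ideal.Quotient.mk J (ρ ^ (k : ℕ))) := by
    intro h
    have := h.fintype_card_le_finrank
    simp [hd] at this
  obtain ⟨c, hc0, i₀, hi₀⟩ := Fintype.not_linearIndependent_iff.mp hni
  have hmem : (∑ k : Fin (d+1), c k • ρ ^ (k : ℕ)) ∈ J := by
    rw [← Ideal.Quotient.eq_zero_iff_mem, ← Ideal.Quotient.mkₐ_eq_mk ℝ, map_sum]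
    simpa only [map_smul, Ideal.Quotient.mkₐ_eq_mk] using hc0
  set h : SmoothFns m M := ∑ k : Fin (d+1), c k • ρ ^ (k : ℕ) with hh
  -- polynomial with the same coefficients
  set p : Polynomial ℝ := ∑ k : Fin (d+1), Polynomial.C (c k) * Polynomial.X ^ (k : ℕ) with hp
  have hpcoeff : p.coeff i₀ = c i₀ := by
    rw [hp, Polynomial.finset_sum_coeff]
    rw [Finset.sum_eq_single i₀]
    · simp
    · intro k _ hk
      have : (k : ℕ) ≠ (i₀ : ℕ) := fun hkk => hk (Fin.ext hkk)
      simp only [Polynomial.coeff_C_mul, Polynomial.coeff_X_pow]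
      rw [if_neg (fun hkk => this hkk.symm), mul_zero]
    · simp
  have hpne : p ≠ 0 := by
    intro h0
    rw [h0] at hpcoeff
    simp at hpcoeff
    exact hi₀ hpcoeff.symm
  -- pointwise evaluation of h
  have heval : ∀ x : M, h x = p.eval (ρ x) := by
    intro x
    have e1 : h x = ∑ k : Fin (d+1), c k * (ρ x) ^ (k : ℕ) := by
      set evx : SmoothFns m M →ₐ[ℝ] ℝ :=
        (Pi.evalAlgHom ℝ (fun _ : M => ℝ) x).comp (ContMDiffMap.coeFnAlgHom)
      have : h x = evx h := rfl
      rw [this, hh, map_sum]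
      simp [evx, smul_eq_mul]
    rw [e1, hp]
    simp [Polynomial.eval_finset_sum]
  -- the zero set of h is compact
  have hZclosed : IsClosed {x : M | h x = 0} :=
    isClosed_eq h.contMDiff.continuous continuous_const
  obtain ⟨B, hB⟩ := (p.finite_setOf_isRoot hpne).bddAbove
  have hZsub : {x : M | h x = 0} ⊆ {x : M | ρ x ≤ B} := by
    intro x hx
    exact hB (by rw [Set.mem_setOf_eq] at hx ⊢; rw [heval x] at hx; exact hx)
  have hZcomp : IsCompact {x : M | h x = 0} :=
    (hρ B).of_isClosed_subset hZclosed hZsub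
  -- the compact set outside U
  have hTcomp : IsCompact ({x : M | h x = 0} \ U) := hZcomp.diff hU
  -- choose functions in J nonvanishing at points outside U
  have hch : ∀ x : M, ∃ g : SmoothFns m M, x ∉ U → (g ∈ J ∧ g x ≠ 0) := by
    intro x
    by_cases hx : x ∈ U
    · exact ⟨0, fun hc => absurd hx hc⟩
    · obtain ⟨g, hg1, hg2⟩ := hspec x hx
      exact ⟨g, fun _ => ⟨hg1, hg2⟩⟩
  choose G hG using hch
  obtain ⟨t, ht1, ht2⟩ := hTcomp.elim_nhds_subcover (fun x => {z | G x z ≠ 0}) (by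
    intro x hx
    have := (hG x hx.2).2
    exact (isOpen_ne.preimage (G x).contMDiff.continuous).mem_nhds this)
  set H : SmoothFns m M := h * h + ∑ x ∈ t, (G x) * (G x) with hHdef
  have hHJ : H ∈ J := by
    refine Ideal.add_mem J (Ideal.mul_mem_left J h hmem) (Ideal.sum_mem J ?_)
    intro x hx
    exact Ideal.mul_mem_left J _ (hG x (ht1 x hx).2).1
  have hHeval : ∀ z : M, H z = h z * h z + ∑ x ∈ t, G x z * G x z := by
    intro z
    have : H z = ContMDiffMap.evalRingHom (I' := 𝓘(ℝ, ℝ)) z H := rfl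
    rw [this, hHdef, map_add, map_sum, map_mul]
    simp [ContMDiffMap.evalRingHom]
  have hHzero : ∀ z : M, H z = 0 → z ∈ U := by
    intro z hz
    by_contra hzU
    rw [hHeval z] at hz
    have h1 : (0:ℝ) ≤ h z * h z := mul_self_nonneg _
    have h2 : (0:ℝ) ≤ ∑ x ∈ t, G x z * G x z :=
      Finset.sum_nonneg fun x _ => mul_self_nonneg _
    have hboth := (add_eq_zero_iff_of_nonneg h1 h2).mp hz
    have hzZ : z ∈ {x : M | h x = 0} := mul_self_eq_zero.mp hboth.1
    have hzT : z ∈ {x : M | h x = 0} \ U := ⟨hzZ, hzU⟩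
    obtain ⟨x, hxt, hxz⟩ := Set.mem_iUnion₂.mp (ht2 hzT)
    have : G x z * G x z = 0 :=
      (Finset.sum_eq_zero_iff_of_nonneg fun x _ => mul_self_nonneg _).mp hboth.2 x hxt
    exact hxz (mul_self_eq_zero.mp this) |>.elim
  obtain ⟨q, hq⟩ := aux_div f H hU hf hHzero
  rw [hq]
  exact Ideal.mul_mem_left J q hHJ

theorem aux_fd {I J : Ideal (SmoothFns m M)} (hIJ : I ≤ J)
    (hfd : FiniteDimensional ℝ (SmoothFns m M ⧸ I)) :
    FiniteDimensional ℝ (SmoothFns m M ⧸ J) := by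
  have hsmul : ∀ (c : ℝ) (x : SmoothFns m M ⧸ I),
      Ideal.Quotient.factor hIJ (c • x) = c • Ideal.Quotient.factor hIJ x := by
    intro c x
    obtain ⟨x, rfl⟩ := Ideal.Quotient.mk_surjective x
    have h1 : (c • Ideal.Quotient.mk I x) = Ideal.Quotient.mk I (c • x) :=
      (map_smul (Ideal.Quotient.mkₐ ℝ I) c x).symm
    rw [h1, Ideal.Quotient.factor_mk, Ideal.Quotient.factor_mk]
    exact map_smul (Ideal.Quotient.mkₐ ℝ J) c x
  let F : (SmoothFns m M ⧸ I) →ₗ[ℝ] (SmoothFns m M ⧸ J) :=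
    { toFun := Ideal.Quotient.factor hIJ
      map_add' := fun a b => RingHom.map_add _ a b
      map_smul' := hsmul }
  have hsurj : Function.Surjective F := by
    intro z
    obtain ⟨x, rfl⟩ := Ideal.Quotient.mk_surjective z
    exact ⟨Ideal.Quotient.mk I x, Ideal.Quotient.factor_mk hIJ x⟩
  exact Module.Finite.of_surjective F hsurj

theorem aux_n_le (J : Ideal (SmoothFns m M)) (hfd : FiniteDimensional ℝ (SmoothFns m M ⧸ J))
    (w : M) (hspec : idealSpec J ⊆ {w}) : nIdeal w ≤ J := by
  intro f hf
  have hf' : ∀ᶠ z in 𝓝 w, f z = 0 := hf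
  obtain ⟨U, hfU, hUopen, hwU⟩ := eventually_nhds_iff.mp hf'
  refine aux_key J hfd hUopen (fun x hx => ?_) f hfU
  have hxw : x ≠ w := fun h => hx (h ▸ hwU)
  have hxs : x ∉ idealSpec J := fun h => hxw (hspec h)
  simp only [idealSpec, Set.mem_setOf_eq, not_forall] at hxs
  obtain ⟨g, hg1, hg2⟩ := hxs
  exact ⟨g, hg1, hg2⟩

/-- Uniqueness of the primary decomposition: if a proper ideal `I` of finite
codimension is the intersection of ideals `J i` whose spectra are distinct singletons `{y i}`,
then `{y 1, …, y n} = spec I` and `J i = I + 𝔫_{y i}` for every `i`. -/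
theorem primary_decomposition_unique
    (I : Ideal (SmoothFns m M)) (hI : I ≠ ⊤)
    (hfd : FiniteDimensional ℝ (SmoothFns m M ⧸ I))
    (n : ℕ) (y : Fin n → M) (hy : Function.Injective y)
    (J : Fin n → Ideal (SmoothFns m M))
    (hJspec : ∀ i, idealSpec (J i) = {y i})
    (hdec : I = ⨅ i, J i) :
    idealSpec I = Set.range y ∧ ∀ i, J i = I + nIdeal (y i) := by
  classical
  have hJle : ∀ i, I ≤ J i := fun i => hdec ▸ iInf_le J i
  have hfdJ : ∀ i, FiniteDimensional ℝ (SmoothFns m M ⧸ J i) := fun i => aux_fd (hJle i) hfd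
  constructor
  · apply Set.Subset.antisymm
    · intro x hx
      by_contra hxr
      have hgex : ∀ i, ∃ g ∈ J i, g x ≠ 0 := by
        intro i
        have hxy : x ≠ y i := fun h => hxr ⟨i, h.symm⟩
        have : x ∉ idealSpec (J i) := by rw [hJspec i]; simpa using hxy
        simp only [idealSpec, Set.mem_setOf_eq, not_forall] at this
        obtain ⟨g, hg1, hg2⟩ := this
        exact ⟨g, hg1, hg2⟩
      choose g hgJ hgx using hgex
      set F : SmoothFns m M := ∏ i : Fin n, g i with hF
      have hFI : F ∈ I := by
        rw [hdec, Ideal.mem_iInf]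
        intro i
        rw [hF, ← Finset.mul_prod_erase Finset.univ g (Finset.mem_univ i)]
        exact Ideal.mul_mem_right _ _ (hgJ i)
      have hFx : F x = 0 := hx F hFI
      have : F x = ∏ i : Fin n, g i x := by
        have : F x = ContMDiffMap.evalRingHom (I' := 𝓘(ℝ, ℝ)) x F := rfl
        rw [this, hF, map_prod]
        rfl
      rw [this] at hFx
      obtain ⟨i, _, hzero⟩ := Finset.prod_eq_zero_iff.mp hFx
      exact hgx i hzero
    · rintro _ ⟨i, rfl⟩ f hf
      have : y i ∈ idealSpec (J i) := by rw [hJspec i]; rfl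
      exact this f (hJle i hf)
  · intro i
    apply le_antisymm
    · -- J i ≤ I + nIdeal (y i)
      intro f hf
      haveI : LocallyCompactSpace M :=
        ChartedSpace.locallyCompactSpace (EuclideanSpace ℝ (Fin m)) M
      haveI : SigmaCompactSpace M := inferInstance
      haveI : TopologicalSpace.MetrizableSpace M := Manifold.metrizableSpace (𝓡 m) M
      haveI : NormalSpace M := by
        letI := TopologicalSpace.metrizableSpaceMetric M
        infer_instance
      set S : Set M := y '' {j | j ≠ i} with hS
      have hSclosed : IsClosed S := (Set.Finite.image y (Set.toFinite _)).isClosed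
      have hd : Disjoint S ({y i} : Set M) := by
        rw [Set.disjoint_right]
        rintro z rfl ⟨j, hj, hje⟩
        exact hj (hy hje)
      obtain ⟨φ, hφ0, hφ1, hφm⟩ :=
        exists_contMDiffMap_zero_one_nhds_of_isClosed (𝓡 m) (n := (⊤ : ℕ∞)) hSclosed isClosed_singleton hd
      have h1 : (1 - φ) * f ∈ nIdeal (y i) := by
        have h1' : ∀ᶠ z in 𝓝 (y i), φ z = 1 := by
          rw [← nhdsSet_singleton]; exact hφ1
        show ∀ᶠ z in 𝓝 (y i), ((1 - φ) * f) z = 0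
        filter_upwards [h1'] with z hz
        simp [hz]
      have h2 : φ * f ∈ I := by
        rw [hdec, Ideal.mem_iInf]
        intro j
        by_cases hj : j = i
        · subst hj
          exact Ideal.mul_mem_left _ _ hf
        · refine aux_n_le (J j) (hfdJ j) (y j) (by rw [hJspec j]) ?_
          have hyjS : y j ∈ S := ⟨j, hj, rfl⟩
          have h0' : ∀ᶠ z in 𝓝 (y j), φ z = 0 := nhds_le_nhdsSet hyjS hφ0
          show ∀ᶠ z in 𝓝 (y j), (φ * f) z = 0
          filter_upwards [h0'] with z hz
          simp [hz]
      have heq : φ * f + (1 - φ) * f = f := by ring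
      rw [← heq]
      exact Submodule.add_mem_sup h2 h1
    · rw [Submodule.add_eq_sup]
      exact sup_le (hJle i) (aux_n_le (J i) (hfdJ i) (y i) (by rw [hJspec i]))
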